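/- Let Θ ⊆ ℝ, and for each θ ∈ Θ let a(θ) ∈ ℂ^{M_s} with ‖a(θ)‖² = M_s and q(θ) ∈ ℂ^M with ‖q(θ)‖² = M. Let X ∈ ℂ^{M×L} satisfy X X^H = cL · I_M for some real c > 0, and set u(θ) = a(θ) q(θ)^T X. Then for every Y ∈ ℂ^{M_s×L} and every θ₁, θ₂ ∈ Θ: min_{α∈ℂ} ‖vec(Y) − α vec(u(θ₁))‖² ≤ min_{α∈ℂ} ‖vec(Y) − α vec(u(θ₂))‖² if and only if |a(θ₁)^H Y X^H conj(q(θ₁))|² ≥ |a(θ₂)^H Y X^H conj(q(θ₂))|². Hence the maximum-likelihood estimate of θ, which minimizes ‖vec(Y) − α vec(u(θ))‖² jointly over (θ, α), is exactly the maximizer of |a(θ)^H Y X^H conj(q(θ))|² over Θ. -/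

import Mathlib

open Matrix

section Aux

lemma pw_aux (y v α : ℂ) : ‖y - α*v‖^2
    = ‖y‖^2 - 2*((starRingEnd ℂ) α * ((starRingEnd ℂ) v * y)).re + ‖α‖^2*‖v‖^2 := by
  simp only [Complex.sq_norm, Complex.normSq_sub, Complex.normSq_mul]
  rw [show y * ((starRingEnd ℂ) (α * v)) = (starRingEnd ℂ) α * ((starRingEnd ℂ) v * y) by
    simp [_root_.map_mul]; ring]
  ring

lemma sum_expand_aux {Ms L : ℕ} (Y U : Matrix (Fin Ms) (Fin L) ℂ) (α : ℂ) :
    ∑ i, ∑ j, ‖Y i j - α * U i j‖^2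
    = (∑ i, ∑ j, ‖Y i j‖^2)
      - 2*((starRingEnd ℂ) α * ∑ i, ∑ j, (starRingEnd ℂ) (U i j) * Y i j).re
      + ‖α‖^2 * ∑ i, ∑ j, ‖U i j‖^2 := by
  simp_rw [pw_aux, Finset.sum_add_distrib, Finset.sum_sub_distrib, Finset.mul_sum,
    Complex.re_sum]
  ring_nf
  simp only [Finset.sum_mul]
  ring

lemma T_eq_aux {Ms M L : ℕ} (a : Fin Ms → ℂ) (q : Fin M → ℂ) (X : Matrix (Fin M) (Fin L) ℂ)
    (Y : Matrix (Fin Ms) (Fin L) ℂ) :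
    star a ⬝ᵥ ((Y * X.conjTranspose) *ᵥ star q)
    = ∑ i, ∑ j, (starRingEnd ℂ) ((vecMulVec a q * X) i j) * Y i j := by
  simp only [dotProduct, mulVec, Matrix.mul_apply, vecMulVec_apply, conjTranspose_apply,
    Pi.star_apply, Finset.mul_sum, Finset.sum_mul, map_sum, _root_.map_mul, RCLike.star_def]
  refine Finset.sum_congr rfl fun i _ => ?_
  rw [Finset.sum_comm]
  exact Finset.sum_congr rfl fun j _ => Finset.sum_congr rfl fun m _ => by ring

lemma tri_comm_aux {α β γ E : Type*} [Fintype α] [Fintype β] [Fintype γ] [AddCommMonoid E]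
    (f : α → β → γ → E) :
    ∑ j : γ, ∑ n : β, ∑ m : α, f m n j = ∑ m, ∑ n, ∑ j, f m n j :=
  calc ∑ j : γ, ∑ n : β, ∑ m : α, f m n j
      = ∑ n, ∑ j, ∑ m, f m n j := Finset.sum_comm
    _ = ∑ n, ∑ m, ∑ j, f m n j := Finset.sum_congr rfl (fun _ _ => Finset.sum_comm)
    _ = ∑ m, ∑ n, ∑ j, f m n j := Finset.sum_comm

lemma vsum_aux {M L : ℕ} (q : Fin M → ℂ) (X : Matrix (Fin M) (Fin L) ℂ) (c : ℝ)
    (hX : X * X.conjTranspose = ((c * (L:ℝ) : ℝ) : ℂ) • (1 : Matrix (Fin M) (Fin M) ℂ)) :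
    ∑ j, ‖∑ m, q m * X m j‖^2 = (c * L) * ∑ m, ‖q m‖^2 := by
  have key : ((∑ j, ‖∑ m, q m * X m j‖^2 : ℝ) : ℂ) = (((c*(L:ℝ)) * ∑ m, ‖q m‖^2 : ℝ) : ℂ) := by
    push_cast
    calc (∑ j : Fin L, ((‖∑ m, q m * X m j‖:ℝ)^2 : ℂ))
        = ∑ j, (∑ m, q m * X m j) * (starRingEnd ℂ) (∑ m, q m * X m j) := by
          refine Finset.sum_congr rfl fun j _ => ?_
          rw [Complex.mul_conj, Complex.normSq_eq_norm_sq]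
          push_cast; ring
      _ = ∑ m, ∑ n, (q m * (starRingEnd ℂ) (q n)) * (X * X.conjTranspose) m n := by
          simp only [map_sum, _root_.map_mul, Finset.sum_mul, Finset.mul_sum,
            Matrix.mul_apply, conjTranspose_apply]
          rw [tri_comm_aux (fun m n j => q m * X m j * ((starRingEnd ℂ) (q n) * (starRingEnd ℂ) (X n j)))]
          exact Finset.sum_congr rfl fun m _ => Finset.sum_congr rfl fun n _ =>
            Finset.sum_congr rfl fun j _ => by simp [RCLike.star_def]; ring
      _ = (((c*(L:ℝ)):ℝ):ℂ) * ∑ m, ((‖q m‖:ℝ)^2 : ℂ) := by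
          rw [hX]
          simp only [Matrix.smul_apply, Matrix.one_apply, smul_eq_mul, mul_ite, mul_one,
            mul_zero, Finset.sum_ite_eq, Finset.sum_ite_eq', Finset.mem_univ, if_true,
            Finset.mul_sum]
          refine Finset.sum_congr rfl fun m _ => ?_
          rw [Complex.mul_conj, Complex.normSq_eq_norm_sq]
          push_cast; ring
      _ = _ := by push_cast; ring
  exact_mod_cast key

end Aux

theorem stmt_12 (Ms M L : ℕ) (Θ : Set ℝ)
    (aF : ℝ → Fin Ms → ℂ) (qF : ℝ → Fin M → ℂ)
    (ha : ∀ θ ∈ Θ, ∑ i, ‖aF θ i‖ ^ 2 = (Ms : ℝ))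
    (hq : ∀ θ ∈ Θ, ∑ j, ‖qF θ j‖ ^ 2 = (M : ℝ))
    (X : Matrix (Fin M) (Fin L) ℂ) (c : ℝ) (hc : 0 < c)
    (hX : X * X.conjTranspose = ((c * (L : ℝ) : ℝ) : ℂ) • (1 : Matrix (Fin M) (Fin M) ℂ))
    (u : ℝ → Matrix (Fin Ms) (Fin L) ℂ)
    (hu : ∀ θ, u θ = Matrix.vecMulVec (aF θ) (qF θ) * X)
    (Y : Matrix (Fin Ms) (Fin L) ℂ) :
    (∀ θ₁ ∈ Θ, ∀ θ₂ ∈ Θ,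
      ((⨅ α : ℂ, ∑ i, ∑ j, ‖Y i j - α * u θ₁ i j‖ ^ 2)
          ≤ (⨅ α : ℂ, ∑ i, ∑ j, ‖Y i j - α * u θ₂ i j‖ ^ 2) ↔
        ‖star (aF θ₂) ⬝ᵥ ((Y * X.conjTranspose) *ᵥ star (qF θ₂))‖ ^ 2
          ≤ ‖star (aF θ₁) ⬝ᵥ ((Y * X.conjTranspose) *ᵥ star (qF θ₁))‖ ^ 2)) ∧
    (∀ θ₀ ∈ Θ,
      ((∃ α₀ : ℂ, ∀ θ ∈ Θ, ∀ α : ℂ,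
          ∑ i, ∑ j, ‖Y i j - α₀ * u θ₀ i j‖ ^ 2 ≤ ∑ i, ∑ j, ‖Y i j - α * u θ i j‖ ^ 2) ↔
        (∀ θ ∈ Θ, ‖star (aF θ) ⬝ᵥ ((Y * X.conjTranspose) *ᵥ star (qF θ))‖ ^ 2
          ≤ ‖star (aF θ₀) ⬝ᵥ ((Y * X.conjTranspose) *ᵥ star (qF θ₀))‖ ^ 2))) := by
  -- notation
  set f : ℝ → ℂ → ℝ := fun θ α => ∑ i, ∑ j, ‖Y i j - α * u θ i j‖ ^ 2 with hf_def
  set T : ℝ → ℂ := fun θ => star (aF θ) ⬝ᵥ ((Y * X.conjTranspose) *ᵥ star (qF θ)) with hT_def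
  set N : ℝ := ∑ i, ∑ j, ‖Y i j‖ ^ 2 with hN_def
  set K : ℝ := (Ms : ℝ) * ((c * L) * (M : ℝ)) with hK_def
  have hK0 : 0 ≤ K := by positivity
  -- the entry formula for u
  have huij : ∀ θ, ∀ i j, u θ i j = aF θ i * ∑ m, qF θ m * X m j := by
    intro θ i j
    rw [hu]
    simp [Matrix.mul_apply, Matrix.vecMulVec_apply, Finset.mul_sum, mul_assoc]
  -- norm of u
  have hUnorm : ∀ θ ∈ Θ, ∑ i, ∑ j, ‖u θ i j‖ ^ 2 = K := by
    intro θ hθ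
    have : ∀ i, ∑ j, ‖u θ i j‖ ^ 2 = ‖aF θ i‖^2 * ((c * L) * (M:ℝ)) := by
      intro i
      simp_rw [huij θ i, norm_mul, mul_pow, ← Finset.mul_sum]
      rw [vsum_aux (qF θ) X c hX, hq θ hθ]
    simp_rw [this, ← Finset.sum_mul, ha θ hθ]
    exact hK_def.symm
  -- T as inner product
  have hTval : ∀ θ, T θ = ∑ i, ∑ j, (starRingEnd ℂ) (u θ i j) * Y i j := by
    intro θ
    rw [hT_def, hu]
    exact T_eq_aux (aF θ) (qF θ) X Y
  -- expansion of f
  have hf : ∀ θ ∈ Θ, ∀ α : ℂ,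
      f θ α = N - 2*((starRingEnd ℂ) α * T θ).re + ‖α‖^2 * K := by
    intro θ hθ α
    rw [hf_def]
    simp only
    rw [sum_expand_aux, hTval θ, hUnorm θ hθ]
  -- minimum value
  set mv : ℝ → ℝ := fun θ => N - ‖T θ‖^2 / K with hmv_def
  -- degenerate case: K = 0 forces T = 0 and f constant
  have hdeg : K = 0 → ∀ θ ∈ Θ, T θ = 0 ∧ ∀ α : ℂ, f θ α = N := by
    intro hK θ hθ
    have hz : ∀ i j, u θ i j = 0 := by
      have h0 : ∑ i, ∑ j, ‖u θ i j‖ ^ 2 = 0 := by rw [hUnorm θ hθ, hK]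
      intro i j
      have h1 := (Finset.sum_eq_zero_iff_of_nonneg (fun i _ => by positivity)).mp h0 i
        (Finset.mem_univ i)
      have h2 := (Finset.sum_eq_zero_iff_of_nonneg (fun j _ => by positivity)).mp h1 j
        (Finset.mem_univ j)
      have : ‖u θ i j‖ = 0 := by nlinarith [norm_nonneg (u θ i j)]
      simpa using this
    constructor
    · rw [hTval θ]
      simp [hz]
    · intro α
      rw [hf_def, hN_def]
      simp [hz]
  -- completed square
  have hsq : 0 < K → ∀ θ ∈ Θ, ∀ α : ℂ,
      f θ α = K * ‖α - T θ / (K:ℂ)‖^2 + mv θ := by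
    intro hK θ hθ α
    rw [hf θ hθ α, hmv_def]
    have e0 : ‖α - T θ / (K:ℂ)‖^2
        = ‖α‖^2 - 2*((starRingEnd ℂ) α * (T θ / (K:ℂ))).re + ‖T θ / (K:ℂ)‖^2 := by
      simp only [Complex.sq_norm, Complex.normSq_sub]
      rw [show α * (starRingEnd ℂ) (T θ / (K:ℂ))
            = (starRingEnd ℂ) ((starRingEnd ℂ) α * (T θ / (K:ℂ))) by
          simp only [_root_.map_mul, RingHomCompTriple.comp_apply, RingHom.id_apply,
            Complex.conj_conj]]
      rw [Complex.conj_re]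
      ring
    have e1 : ((starRingEnd ℂ) α * (T θ / (K:ℂ))).re
        = ((starRingEnd ℂ) α * T θ).re / K := by
      rw [mul_div_assoc', Complex.div_ofReal_re]
    have e2 : ‖T θ / (K:ℂ)‖^2 = ‖T θ‖^2 / K^2 := by
      rw [norm_div, div_pow]
      congr 1
      rw [Complex.norm_real, Real.norm_eq_abs, sq_abs]
    rw [e0, e1, e2]
    field_simp
    ring
  -- lower bound
  have hlb : ∀ θ ∈ Θ, ∀ α : ℂ, mv θ ≤ f θ α := by
    intro θ hθ α
    rcases hK0.lt_or_eq with hK | hK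
    · rw [hsq hK θ hθ α]
      nlinarith [sq_nonneg ‖α - T θ / (K:ℂ)‖, norm_nonneg (α - T θ / (K:ℂ)), hK]
    · obtain ⟨hT0, hfc⟩ := hdeg hK.symm θ hθ
      rw [hfc α, hmv_def]
      simp [hT0]
  -- attainment
  have hatt : ∀ θ ∈ Θ, ∃ α₀ : ℂ, f θ α₀ = mv θ := by
    intro θ hθ
    rcases hK0.lt_or_eq with hK | hK
    · refine ⟨T θ / (K:ℂ), ?_⟩
      rw [hsq hK θ hθ]
      simp
    · obtain ⟨hT0, hfc⟩ := hdeg hK.symm θ hθ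
      exact ⟨0, by rw [hfc 0, hmv_def]; simp [hT0]⟩
  -- the infimum equals mv
  have hInf : ∀ θ ∈ Θ, (⨅ α : ℂ, f θ α) = mv θ := by
    intro θ hθ
    obtain ⟨α₀, hα₀⟩ := hatt θ hθ
    refine le_antisymm ?_ (le_ciInf (hlb θ hθ))
    calc (⨅ α : ℂ, f θ α) ≤ f θ α₀ :=
          ciInf_le ⟨mv θ, by rintro x ⟨α, rfl⟩; exact hlb θ hθ α⟩ α₀
      _ = mv θ := hα₀
  -- comparison of mv values
  have hcmp : ∀ θ₁ ∈ Θ, ∀ θ₂ ∈ Θ, (mv θ₁ ≤ mv θ₂ ↔ ‖T θ₂‖^2 ≤ ‖T θ₁‖^2) := by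
    intro θ₁ h₁ θ₂ h₂
    rcases hK0.lt_or_eq with hK | hK
    · rw [hmv_def]
      simp only [sub_le_sub_iff_left]
      exact div_le_div_iff_of_pos_right hK
    · have t1 := (hdeg hK.symm θ₁ h₁).1
      have t2 := (hdeg hK.symm θ₂ h₂).1
      simp [hmv_def, t1, t2]
  constructor
  · intro θ₁ h₁ θ₂ h₂
    rw [show (⨅ α : ℂ, ∑ i, ∑ j, ‖Y i j - α * u θ₁ i j‖ ^ 2) = ⨅ α : ℂ, f θ₁ α from rfl,
      show (⨅ α : ℂ, ∑ i, ∑ j, ‖Y i j - α * u θ₂ i j‖ ^ 2) = ⨅ α : ℂ, f θ₂ α from rfl,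
      hInf θ₁ h₁, hInf θ₂ h₂]
    exact hcmp θ₁ h₁ θ₂ h₂
  · intro θ₀ h₀
    constructor
    · rintro ⟨α₀, h⟩ θ hθ
      obtain ⟨α₁, hα₁⟩ := hatt θ hθ
      have : mv θ₀ ≤ mv θ := by
        calc mv θ₀ ≤ f θ₀ α₀ := hlb θ₀ h₀ α₀
          _ ≤ f θ α₁ := h θ hθ α₁
          _ = mv θ := hα₁
      exact (hcmp θ₀ h₀ θ hθ).mp this
    · intro h
      obtain ⟨α₀, hα₀⟩ := hatt θ₀ h₀
      refine ⟨α₀, fun θ hθ α => ?_⟩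
      calc f θ₀ α₀ = mv θ₀ := hα₀
        _ ≤ mv θ := (hcmp θ₀ h₀ θ hθ).mpr (h θ hθ)
        _ ≤ f θ α := hlb θ hθ α
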